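/- arXiv:2104.04878 — 5 statements merged into one kernel-verified Lean document; each statement's English description precedes it below -/
import Mathlib

section
/- Let A be a function holomorphic on a neighborhood of 0 in ℂ and let θ ∈ ℂ with θ ∉ {0, −1, −2, −3, …} (θ is neither zero nor a negative integer). Then there exist r > 0 and a holomorphic function w on the disk D(0,r) with w(0) = 0 and w'(0) ≠ 0 such that for every z ∈ D(0,r) ∖ {0} with w(z) ∈ ℂ ∖ (−∞,0], the function f(ζ) = w(ζ)^θ (principal branch of the complex power) satisfies z·f''(z) = ((θ−1) + z·A(z))·f'(z). -/
open Filter Topology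

open scoped ENNReal NNReal

namespace FuchsianAux

open FormalMultilinearSeries

lemma ofScalars_coeff (c : ℕ → ℂ) (n : ℕ) :
    (ofScalars ℂ c).coeff n = c n := by
  have h := FormalMultilinearSeries.ofScalars_apply_eq (E := ℂ) c 1 n
  rw [FormalMultilinearSeries.coeff, show (1 : Fin n → ℂ) = fun _ => (1 : ℂ) from rfl, h]
  simp

lemma hasSum_coeff_mul {f : ℂ → ℂ} {p : FormalMultilinearSeries ℂ ℂ ℂ} {R : ℝ≥0∞}
    (hp : HasFPowerSeriesOnBall f p 0 R) {z : ℂ} (hz : (‖z‖₊ : ℝ≥0∞) < R) :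
    HasSum (fun n => p.coeff n * z ^ n) (f z) := by
  have h := hp.hasSum (y := z) (by simpa [EMetric.mem_ball, enorm_eq_nnnorm] using hz)
  rw [zero_add] at h
  simpa [FormalMultilinearSeries.apply_eq_pow_smul_coeff, smul_eq_mul, mul_comm] using h

lemma hasSum_zderiv {f : ℂ → ℂ} {p : FormalMultilinearSeries ℂ ℂ ℂ} {R : ℝ≥0∞}
    (hp : HasFPowerSeriesOnBall f p 0 R) {z : ℂ} (hz : (‖z‖₊ : ℝ≥0∞) < R) :
    HasSum (fun (n : ℕ) => ((n : ℂ) + 1) * p.coeff (n + 1) * z ^ (n + 1)) (z * deriv f z) := by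
  have h := (hp.fderiv).hasSum (y := z)
    (by simpa [EMetric.mem_ball, enorm_eq_nnnorm] using hz)
  rw [zero_add] at h
  have h2 := h.mapL (ContinuousLinearMap.apply ℂ ℂ z)
  have hterm : (fun n => (ContinuousLinearMap.apply ℂ ℂ z) (p.derivSeries n (fun _ => z)))
      = fun (n : ℕ) => ((n : ℂ) + 1) * p.coeff (n + 1) * z ^ (n + 1) := by
    funext n
    simp only [ContinuousLinearMap.apply_apply]
    rw [p.derivSeries_apply_diag n z, FormalMultilinearSeries.apply_eq_pow_smul_coeff]
    push_cast [nsmul_eq_mul, smul_eq_mul]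
    ring
  have hv : (ContinuousLinearMap.apply ℂ ℂ z) (fderiv ℂ f z) = z * deriv f z := by
    simp only [ContinuousLinearMap.apply_apply]
    rw [show (fderiv ℂ f z) z = z * (fderiv ℂ f z) 1 from by
      rw [← smul_eq_mul, ← ContinuousLinearMap.map_smul, smul_eq_mul, mul_one], fderiv_apply_one_eq_deriv]
  rw [hterm, hv] at h2
  exact h2

lemma hasFPowerSeriesOnBall_ofScalars (c : ℕ → ℂ) {r : ℝ≥0} (hr : 0 < r) {C : ℝ}
    (hC : ∀ n, ‖c n‖ * (r : ℝ) ^ n ≤ C) :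
    HasFPowerSeriesOnBall (ofScalars ℂ c).sum (ofScalars ℂ c) 0 r := by
  have hrad : (r : ℝ≥0∞) ≤ (ofScalars ℂ c).radius :=
    (ofScalars ℂ c).le_radius_of_bound C fun n => by
      rw [FormalMultilinearSeries.norm_apply_eq_norm_coef, ofScalars_coeff]; exact hC n
  have h0 : (0 : ℝ≥0∞) < r := by exact_mod_cast hr
  exact ((ofScalars ℂ c).hasFPowerSeriesOnBall (h0.trans_le hrad)).mono h0 hrad

lemma exists_theta_bound (θ : ℂ) : ∃ M : ℝ, 0 ≤ M ∧ ∀ n : ℕ, ‖θ / (θ + n)‖ ≤ M := by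
  set N := ⌈‖θ‖⌉₊ + 1 with hN
  refine ⟨max ‖θ‖ (((Finset.range N).sup fun n => ‖θ / (θ + n)‖₊) : ℝ≥0),
    le_trans (norm_nonneg θ) (le_max_left _ _), fun n => ?_⟩
  rcases lt_or_ge n N with hn | hn
  · refine le_trans ?_ (le_max_right _ _)
    have := Finset.le_sup (f := fun n : ℕ => ‖θ / (θ + n)‖₊) (Finset.mem_range.mpr hn)
    exact_mod_cast this
  · refine le_trans ?_ (le_max_left _ _)
    have h1 : (1 : ℝ) ≤ ‖θ + (n : ℂ)‖ := by
      have hn' : ((N : ℝ)) ≤ (n : ℝ) := by exact_mod_cast hn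
      have hceil : ‖θ‖ ≤ (⌈‖θ‖⌉₊ : ℝ) := Nat.le_ceil _
      have hNval : ‖θ‖ + 1 ≤ (N : ℝ) := by
        rw [hN]; push_cast; linarith
      have hlow : (n : ℝ) - ‖θ‖ ≤ ‖θ + (n : ℂ)‖ := by
        have := norm_sub_norm_le ((n : ℂ)) (-θ)
        simp only [norm_neg, sub_neg_eq_add] at this
        calc (n : ℝ) - ‖θ‖ = ‖(n : ℂ)‖ - ‖θ‖ := by
              simp
          _ ≤ ‖(n : ℂ) + θ‖ := this
          _ = ‖θ + (n : ℂ)‖ := by rw [add_comm]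
      linarith
    rw [norm_div]
    exact div_le_self (norm_nonneg _) h1

end FuchsianAux

open FuchsianAux FormalMultilinearSeries in
set_option maxHeartbeats 2000000 in
/-- Normal form for a Fuchsian singularity of an affine structure on a curve, generic case:
if `θ` is neither zero nor a negative integer, the singular affine structure encoded by the
ODE `z f'' = ((θ-1) + z A(z)) f'` has developing map `z ↦ z^θ` in a suitable coordinate `w`. -/
theorem fuchsian_affine_normal_form_generic
    (A : ℂ → ℂ) (hA : AnalyticAt ℂ A 0)
    (θ : ℂ) (hθ : ∀ k : ℕ, θ ≠ -(k : ℂ)) :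
    ∃ r > (0 : ℝ), ∃ w : ℂ → ℂ,
      DifferentiableOn ℂ w (Metric.ball (0 : ℂ) r) ∧ w 0 = 0 ∧ deriv w 0 ≠ 0 ∧
      ∀ z ∈ Metric.ball (0 : ℂ) r, z ≠ 0 → w z ∈ Complex.slitPlane →
        z * deriv (deriv fun ζ => w ζ ^ θ) z
          = ((θ - 1) + z * A z) * deriv (fun ζ => w ζ ^ θ) z := by
  classical
  have hθ0 : θ ≠ 0 := by simpa using hθ 0
  have hθn : ∀ n : ℕ, θ + (n : ℂ) ≠ 0 := by
    intro n h
    exact hθ n (by linear_combination h)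
  obtain ⟨pa, Ra, hpa⟩ : ∃ p R, HasFPowerSeriesOnBall A p 0 R := by
    obtain ⟨p, hp⟩ := hA; obtain ⟨R, hR⟩ := hp; exact ⟨p, R, hR⟩
  obtain ⟨ra, hra0, hraR⟩ : ∃ ra : ℝ≥0, 0 < ra ∧ (ra : ℝ≥0∞) < Ra := by
    obtain ⟨r, h1, h2⟩ := ENNReal.lt_iff_exists_nnreal_btwn.1 hpa.r_pos
    exact ⟨r, by exact_mod_cast h1, h2⟩
  obtain ⟨Ca, hCa0, hCa⟩ := pa.norm_mul_pow_le_of_lt_radius (hraR.trans_le hpa.r_le)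
  set a : ℕ → ℂ := fun n => pa.coeff n with ha
  have hCa' : ∀ n, ‖a n‖ * (ra : ℝ) ^ n ≤ Ca := fun n => by
    have := hCa n
    rwa [FormalMultilinearSeries.norm_apply_eq_norm_coef] at this
  -- the primitive B of A
  set b : ℕ → ℂ := fun n => Nat.casesOn n 0 (fun m => a m / ((m : ℂ) + 1)) with hb
  have hCb : ∀ n, ‖b n‖ * (ra : ℝ) ^ n ≤ Ca * ra := by
    intro n
    match n with
    | 0 =>
      show ‖(0 : ℂ)‖ * (ra : ℝ) ^ 0 ≤ Ca * ra
      simpa using mul_nonneg hCa0.le (NNReal.coe_nonneg ra)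
    | (m + 1) =>
      have h1 : ‖b (m + 1)‖ ≤ ‖a m‖ := by
        show ‖a m / ((m : ℂ) + 1)‖ ≤ ‖a m‖
        rw [norm_div]
        apply div_le_self (norm_nonneg _)
        rw [show ((m : ℂ) + 1) = (((m + 1 : ℕ)) : ℂ) by push_cast; ring, Complex.norm_natCast]
        exact_mod_cast Nat.one_le_iff_ne_zero.mpr (Nat.succ_ne_zero m)
      calc ‖b (m + 1)‖ * (ra : ℝ) ^ (m + 1)
          ≤ ‖a m‖ * (ra : ℝ) ^ (m + 1) := mul_le_mul_of_nonneg_right h1 (by positivity)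
        _ = (‖a m‖ * (ra : ℝ) ^ m) * ra := by rw [pow_succ]; ring
        _ ≤ Ca * ra := mul_le_mul_of_nonneg_right (hCa' m) (NNReal.coe_nonneg _)
  have hB := hasFPowerSeriesOnBall_ofScalars b hra0 hCb
  set B := (ofScalars ℂ b).sum with hBdef
  have hBanal : AnalyticOnNhd ℂ B (EMetric.ball 0 (ra : ℝ≥0∞)) := hB.analyticOnNhd
  have hB0 : B 0 = 0 := by
    have h := hB.coeff_zero (fun _ => 1)
    have h2 : (ofScalars ℂ b) 0 (fun _ => 1) = b 0 := by
      have := ofScalars_coeff b 0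
      rwa [FormalMultilinearSeries.coeff] at this
    rw [h2] at h
    simpa [hb] using h.symm
  have hderivB : ∀ z : ℂ, (‖z‖₊ : ℝ≥0∞) < ra → z ≠ 0 → deriv B z = A z := by
    intro z hz hz0
    have h1 := hasSum_zderiv hB hz
    have h2 := (hasSum_coeff_mul hpa (hz.trans hraR)).mul_left z
    have hfe : (fun (n : ℕ) => ((n : ℂ) + 1) * (ofScalars ℂ b).coeff (n + 1) * z ^ (n + 1))
        = fun (n : ℕ) => z * (pa.coeff n * z ^ n) := by
      funext n
      rw [ofScalars_coeff]
      have hne : ((n : ℂ) + 1) ≠ 0 := by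
        have := hθn -- dummy
        exact_mod_cast Nat.cast_add_one_ne_zero (R := ℂ) n
      rw [hb]
      show ((n : ℂ) + 1) * (a n / ((n : ℂ) + 1)) * z ^ (n + 1) = z * (pa.coeff n * z ^ n)
      rw [ha]
      field_simp
      ring
    rw [hfe] at h1
    exact mul_left_cancel₀ hz0 (h1.unique h2)
  -- h = exp ∘ B
  set h : ℂ → ℂ := fun z => Complex.exp (B z) with hhdef
  have hh0 : h 0 = 1 := by simp [hhdef, hB0]
  have hhanal : AnalyticOnNhd ℂ h (EMetric.ball 0 (ra : ℝ≥0∞)) :=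
    fun z hz => (hBanal z hz).cexp
  obtain ⟨q, Rh, hqB0⟩ : ∃ p R, HasFPowerSeriesOnBall h p 0 R := by
    obtain ⟨p, hp⟩ := hhanal 0 (Metric.mem_eball_self (by exact_mod_cast hra0))
    obtain ⟨R, hR⟩ := hp; exact ⟨p, R, hR⟩
  obtain ⟨rh, hrh0, hrhlt⟩ : ∃ rh : ℝ≥0, 0 < rh ∧ (rh : ℝ≥0∞) < min Rh ra := by
    obtain ⟨r, h1, h2⟩ := ENNReal.lt_iff_exists_nnreal_btwn.1
      (lt_min hqB0.r_pos (by exact_mod_cast hra0 : (0:ℝ≥0∞) < ra))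
    exact ⟨r, by exact_mod_cast h1, h2⟩
  have hrhRh : (rh : ℝ≥0∞) ≤ Rh := ((hrhlt.trans_le (min_le_left _ _))).le
  have hrhra : (rh : ℝ≥0∞) ≤ ra := ((hrhlt.trans_le (min_le_right _ _))).le
  have hqB : HasFPowerSeriesOnBall h q 0 rh :=
    hqB0.mono (by exact_mod_cast hrh0) hrhRh
  obtain ⟨M, hM0, hM⟩ := exists_theta_bound θ
  obtain ⟨rc, hrc0, hrclt⟩ : ∃ rc : ℝ≥0, 0 < rc ∧ (rc : ℝ≥0∞) < rh := by
    obtain ⟨r, h1, h2⟩ := ENNReal.lt_iff_exists_nnreal_btwn.1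
      (by exact_mod_cast hrh0 : (0:ℝ≥0∞) < rh)
    exact ⟨r, by exact_mod_cast h1, h2⟩
  obtain ⟨Cq, hCq0, hCq⟩ := q.norm_mul_pow_le_of_lt_radius (hrclt.trans_le hqB.r_le)
  set c : ℕ → ℂ := fun n => (θ / (θ + n)) * q.coeff n with hc
  have hCc : ∀ n, ‖c n‖ * (rc : ℝ) ^ n ≤ M * Cq := by
    intro n
    rw [hc]
    show ‖(θ / (θ + n)) * q.coeff n‖ * (rc : ℝ) ^ n ≤ M * Cq
    rw [norm_mul, mul_assoc]
    have h1 : ‖q.coeff n‖ * (rc : ℝ) ^ n ≤ Cq := by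
      have := hCq n
      rwa [FormalMultilinearSeries.norm_apply_eq_norm_coef] at this
    exact mul_le_mul (hM n) h1 (by positivity) hM0
  have hg := hasFPowerSeriesOnBall_ofScalars c hrc0 hCc
  set g := (ofScalars ℂ c).sum with hgdef
  have hganal : AnalyticOnNhd ℂ g (EMetric.ball 0 (rc : ℝ≥0∞)) := hg.analyticOnNhd
  have hq0 : q.coeff 0 = 1 := by
    have hcz := hqB.coeff_zero (fun _ => 1)
    rw [hh0] at hcz
    rw [FormalMultilinearSeries.coeff]
    exact hcz
  have hg0 : g 0 = 1 := by
    have hcz := hg.coeff_zero (fun _ => 1)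
    have h2 : (ofScalars ℂ c) 0 (fun _ => 1) = c 0 := by
      have := ofScalars_coeff c 0
      rwa [FormalMultilinearSeries.coeff] at this
    rw [h2] at hcz
    rw [← hcz, hc]
    show (θ / (θ + (0:ℕ))) * q.coeff 0 = 1
    rw [hq0]
    simp [div_self hθ0]
  -- the key identity : θ g + z g' = θ h on the ball of radius rc
  have hI : ∀ z : ℂ, (‖z‖₊ : ℝ≥0∞) < rc → θ * g z + z * deriv g z = θ * h z := by
    intro z hz
    have h1 := (hasSum_coeff_mul hg hz).mul_left θ
    have h2 := hasSum_zderiv hg hz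
    have h3 := (hasSum_coeff_mul hqB (hz.trans hrclt)).mul_left θ
    set f : ℕ → ℂ := fun n => (n : ℂ) * c n * z ^ n with hf
    have h2' : HasSum f (z * deriv g z) := by
      have he : (fun (n : ℕ) => ((n : ℂ) + 1) * (ofScalars ℂ c).coeff (n + 1) * z ^ (n + 1))
          = fun n => f (n + 1) := by
        funext n
        rw [ofScalars_coeff, hf]
        show ((n : ℂ) + 1) * c (n + 1) * z ^ (n + 1)
          = (((n + 1 : ℕ)) : ℂ) * c (n + 1) * z ^ (n + 1)
        push_cast; ring
      rw [he] at h2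
      have := (hasSum_nat_add_iff (f := f) 1).mp h2
      simpa [hf] using this
    have h12 := h1.add h2'
    have hfe : (fun n => θ * ((ofScalars ℂ c).coeff n * z ^ n) + f n)
        = fun n => θ * (q.coeff n * z ^ n) := by
      funext n
      rw [ofScalars_coeff, hf, hc]
      show θ * ((θ / (θ + n)) * q.coeff n * z ^ n) + (n : ℂ) * ((θ / (θ + n)) * q.coeff n) * z ^ n
        = θ * (q.coeff n * z ^ n)
      have hne := hθn n
      field_simp
    rw [hfe] at h12
    exact h12.unique h3
  -- choose the final radius via continuity of g at 0
  have hgcont : ContinuousAt g 0 :=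
    (hganal 0 (Metric.mem_eball_self (by exact_mod_cast hrc0))).continuousAt
  obtain ⟨δ, hδ0, hδ⟩ : ∃ δ > (0:ℝ), ∀ ζ : ℂ, dist ζ 0 < δ → dist (g ζ) (g 0) < 1 :=
    Metric.continuousAt_iff.mp hgcont 1 one_pos
  set rf : ℝ := min δ (rc : ℝ) with hrf
  have hrf0 : 0 < rf := lt_min hδ0 (NNReal.coe_pos.mpr hrc0)
  have hmem : ∀ ζ : ℂ, ζ ∈ Metric.ball (0:ℂ) rf → (‖ζ‖₊ : ℝ≥0∞) < rc := by
    intro ζ hζ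
    rw [Metric.mem_ball, dist_zero_right] at hζ
    have : ‖ζ‖ < (rc : ℝ) := lt_of_lt_of_le hζ (min_le_right _ _)
    rw [ENNReal.coe_lt_coe, ← NNReal.coe_lt_coe, coe_nnnorm]
    exact this
  have hmemE : ∀ ζ : ℂ, ζ ∈ Metric.ball (0:ℂ) rf → ζ ∈ EMetric.ball (0:ℂ) (rc : ℝ≥0∞) := by
    intro ζ hζ
    exact Metric.mem_eball.mpr (by rw [edist_zero_right]; exact hmem ζ hζ)
  have hslit : ∀ ζ ∈ Metric.ball (0:ℂ) rf, g ζ ∈ Complex.slitPlane ∧ g ζ ≠ 0 := by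
    intro ζ hζ
    rw [Metric.mem_ball] at hζ
    have h1 : ‖g ζ - 1‖ < 1 := by
      have := hδ ζ (lt_of_lt_of_le hζ (min_le_left _ _))
      rwa [dist_eq_norm, hg0] at this
    have h2 : |(g ζ - 1).re| ≤ ‖g ζ - 1‖ := Complex.abs_re_le_norm _
    have h3 : 0 < (g ζ).re := by
      have : (g ζ).re = (g ζ - 1).re + 1 := by simp [Complex.sub_re]
      rw [this]
      have := abs_lt.mp (h2.trans_lt h1)
      linarith [this.1]
    refine ⟨Or.inl h3, fun hzero => by simp [hzero] at h3⟩
  -- the coordinate w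
  set u : ℂ → ℂ := fun ζ => Complex.exp (θ⁻¹ * Complex.log (g ζ)) with hu_def
  set U : ℂ → ℂ := fun ζ => u ζ * (deriv g ζ / (θ * g ζ)) with hU_def
  set w : ℂ → ℂ := fun ζ => ζ * u ζ with hw_def
  have hgd : ∀ ζ ∈ Metric.ball (0:ℂ) rf, HasDerivAt g (deriv g ζ) ζ := fun ζ hζ =>
    (hganal ζ (hmemE ζ hζ)).differentiableAt.hasDerivAt
  have hgd2 : ∀ ζ ∈ Metric.ball (0:ℂ) rf, HasDerivAt (deriv g) (deriv (deriv g) ζ) ζ :=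
    fun ζ hζ => ((hganal.deriv) ζ (hmemE ζ hζ)).differentiableAt.hasDerivAt
  have hu : ∀ ζ ∈ Metric.ball (0:ℂ) rf, HasDerivAt u (U ζ) ζ := by
    intro ζ hζ
    have hlog : HasDerivAt (fun t => Complex.log (g t)) (deriv g ζ / g ζ) ζ :=
      (hgd ζ hζ).clog (hslit ζ hζ).1
    have h1 := (hlog.const_mul θ⁻¹).cexp
    have he : θ⁻¹ * (deriv g ζ / g ζ) = deriv g ζ / (θ * g ζ) := by
      rw [inv_mul_eq_div, div_div, mul_comm (g ζ) θ]
    rw [he] at h1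
    exact h1
  have hw : ∀ ζ ∈ Metric.ball (0:ℂ) rf, HasDerivAt w (u ζ + ζ * U ζ) ζ := by
    intro ζ hζ
    have := (hasDerivAt_id' ζ).mul (hu ζ hζ)
    rw [one_mul] at this
    exact this
  refine ⟨rf, hrf0, w, ?_, ?_, ?_, ?_⟩
  · exact fun ζ hζ => ((hw ζ hζ).differentiableAt).differentiableWithinAt
  · simp [hw_def]
  · have h0mem : (0:ℂ) ∈ Metric.ball (0:ℂ) rf := by simpa using hrf0
    rw [(hw 0 h0mem).deriv]
    simp [hu_def, hg0]
  intro z hz hz0 hwslit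
  have hzrc := hmem z hz
  have hgz_ne : g z ≠ 0 := (hslit z hz).2
  have huz_ne : u z ≠ 0 := Complex.exp_ne_zero _
  have hwz_ne : w z ≠ 0 := mul_ne_zero hz0 huz_ne
  -- derivative of A-identity : the value of A z
  have hBd : HasDerivAt B (deriv B z) z := by
    refine (hBanal z ?_).differentiableAt.hasDerivAt
    exact EMetric.ball_subset_ball (le_trans hrclt.le hrhra) (hmemE z hz)
  have hhd : HasDerivAt h (Complex.exp (B z) * A z) z := by
    have := hBd.cexp
    rwa [hderivB z (lt_of_lt_of_le (hmem z hz) (le_trans hrclt.le hrhra)) hz0] at this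
  have hIev : (fun ζ => θ * g ζ + ζ * deriv g ζ) =ᶠ[nhds z] (fun ζ => θ * h ζ) :=
    Filter.eventuallyEq_of_mem (Metric.isOpen_ball.mem_nhds hz)
      (fun ζ hζ => hI ζ (hmem ζ hζ))
  have e1 : HasDerivAt (fun ζ => θ * g ζ + ζ * deriv g ζ)
      (θ * deriv g z + ((1:ℂ) * deriv g z + z * deriv (deriv g) z)) z :=
    ((hgd z hz).const_mul θ).add ((hasDerivAt_id z).mul (hgd2 z hz))
  have e2 : HasDerivAt (fun ζ => θ * h ζ) (θ * (Complex.exp (B z) * A z)) z :=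
    hhd.const_mul θ
  have hE : θ * deriv g z + ((1:ℂ) * deriv g z + z * deriv (deriv g) z)
      = θ * (Complex.exp (B z) * A z) := by
    rw [← e1.deriv, ← e2.deriv]
    exact hIev.deriv_eq
  have hhz : h z = Complex.exp (B z) := rfl
  have hden : θ * g z + z * deriv g z ≠ 0 := by
    rw [hI z hzrc, hhz]
    exact mul_ne_zero hθ0 (Complex.exp_ne_zero _)
  have hAz : A z = (θ * deriv g z + (deriv g z + z * deriv (deriv g) z))
      / (θ * g z + z * deriv g z) := by
    rw [eq_div_iff hden]
    have h2 : θ * h z = θ * g z + z * deriv g z := (hI z hzrc).symm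
    rw [hhz] at h2
    calc A z * (θ * g z + z * deriv g z) = A z * (θ * Complex.exp (B z)) := by rw [h2]
      _ = θ * (Complex.exp (B z) * A z) := by ring
      _ = θ * deriv g z + ((1:ℂ) * deriv g z + z * deriv (deriv g) z) := hE.symm
      _ = θ * deriv g z + (deriv g z + z * deriv (deriv g) z) := by ring
  -- second derivative data
  have hUd : HasDerivAt U (U z * (deriv g z / (θ * g z))
      + u z * ((deriv (deriv g) z * (θ * g z) - deriv g z * (θ * deriv g z)) / (θ * g z) ^ 2)) z := by
    have hdiv : HasDerivAt (fun ζ => deriv g ζ / (θ * g ζ))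
        ((deriv (deriv g) z * (θ * g z) - deriv g z * (θ * deriv g z)) / (θ * g z) ^ 2) z :=
      (hgd2 z hz).div ((hgd z hz).const_mul θ) (mul_ne_zero hθ0 hgz_ne)
    exact (hu z hz).mul hdiv
  -- the neighbourhood where w lands in the slit plane
  have hwcont : ContinuousOn w (Metric.ball (0:ℂ) rf) :=
    fun ζ hζ => ((hw ζ hζ).differentiableAt).continuousAt.continuousWithinAt
  have hVopen : IsOpen (Metric.ball (0:ℂ) rf ∩ w ⁻¹' Complex.slitPlane) :=
    hwcont.isOpen_inter_preimage Metric.isOpen_ball Complex.isOpen_slitPlane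
  have hzV : z ∈ Metric.ball (0:ℂ) rf ∩ w ⁻¹' Complex.slitPlane := ⟨hz, hwslit⟩
  have hF : ∀ ζ ∈ Metric.ball (0:ℂ) rf ∩ w ⁻¹' Complex.slitPlane,
      HasDerivAt (fun t => w t ^ θ) (θ * w ζ ^ (θ - 1) * (u ζ + ζ * U ζ)) ζ :=
    fun ζ hζ => (hw ζ hζ.1).cpow_const hζ.2
  have hderivF : deriv (fun t => w t ^ θ) =ᶠ[nhds z]
      (fun ζ => θ * w ζ ^ (θ - 1) * (u ζ + ζ * U ζ)) :=
    Filter.eventuallyEq_of_mem (hVopen.mem_nhds hzV) (fun ζ hζ => (hF ζ hζ).deriv)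
  have hd1 : deriv (fun t => w t ^ θ) z = θ * w z ^ (θ - 1) * (u z + z * U z) :=
    (hF z hzV).deriv
  have hc1 : HasDerivAt (fun ζ => w ζ ^ (θ - 1))
      ((θ - 1) * w z ^ (θ - 1 - 1) * (u z + z * U z)) z :=
    (hw z hz).cpow_const hwslit
  have hc2 : HasDerivAt (fun ζ => u ζ + ζ * U ζ)
      (U z + ((1:ℂ) * U z + z * (U z * (deriv g z / (θ * g z))
      + u z * ((deriv (deriv g) z * (θ * g z) - deriv g z * (θ * deriv g z)) / (θ * g z) ^ 2)))) z :=
    (hu z hz).add ((hasDerivAt_id z).mul hUd)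
  have hc4 : HasDerivAt (fun ζ => θ * (w ζ ^ (θ - 1) * (u ζ + ζ * U ζ)))
      (θ * (((θ - 1) * w z ^ (θ - 1 - 1) * (u z + z * U z)) * (u z + z * U z)
        + w z ^ (θ - 1) * (U z + ((1:ℂ) * U z + z * (U z * (deriv g z / (θ * g z))
      + u z * ((deriv (deriv g) z * (θ * g z) - deriv g z * (θ * deriv g z)) / (θ * g z) ^ 2)))))) z :=
    (hc1.mul hc2).const_mul θ
  have hd2 : deriv (deriv (fun t => w t ^ θ)) z
      = θ * (((θ - 1) * w z ^ (θ - 1 - 1) * (u z + z * U z)) * (u z + z * U z)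
        + w z ^ (θ - 1) * (U z + ((1:ℂ) * U z + z * (U z * (deriv g z / (θ * g z))
      + u z * ((deriv (deriv g) z * (θ * g z) - deriv g z * (θ * deriv g z)) / (θ * g z) ^ 2))))) := by
    rw [hderivF.deriv_eq]
    rw [show (fun ζ => θ * w ζ ^ (θ - 1) * (u ζ + ζ * U ζ))
        = (fun ζ => θ * (w ζ ^ (θ - 1) * (u ζ + ζ * U ζ))) from funext fun ζ => by ring]
    exact hc4.deriv
  rw [hd2, hd1, hAz]
  have hsub : w z ^ (θ - 1 - 1) = w z ^ (θ - 1) / w z := by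
    rw [Complex.cpow_sub _ _ hwz_ne, Complex.cpow_one]
  rw [hsub]
  have hwzval : w z = z * u z := rfl
  have hUzval : U z = u z * (deriv g z / (θ * g z)) := rfl
  rw [hwzval, hUzval]
  field_simp [mul_ne_zero hθ0 hgz_ne, mul_ne_zero hz0 huz_ne, hden, hθ0, hgz_ne, huz_ne, hz0]
  ring_nf
end

section
/- Let A be a function holomorphic on a neighborhood of 0 in ℂ. Then there exist r > 0 and a holomorphic function w on the disk D(0,r) with w(0) = 0 and w'(0) ≠ 0 such that for every z ∈ D(0,r) ∖ {0} with w(z) ∈ ℂ ∖ (−∞,0], the function f(ζ) = log(w(ζ)) (principal branch of the logarithm) satisfies z·f''(z) = (−1 + z·A(z))·f'(z). -/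
open Filter Topology

open FormalMultilinearSeries

lemma exists_primitive_of_analyticAt {g : ℂ → ℂ} (hg : AnalyticAt ℂ g 0) :
    ∃ G : ℂ → ℂ, AnalyticAt ℂ G 0 ∧ G 0 = 0 ∧ ∀ᶠ z in 𝓝 (0:ℂ), HasDerivAt G (g z) z := by
  obtain ⟨p, hp⟩ := hg
  obtain ⟨r, hpr⟩ := hp
  obtain ⟨r0, hr00, hr0r⟩ : ∃ r0 : NNReal, 0 < r0 ∧ (r0 : ENNReal) < min r 1 := by
    obtain ⟨a, ha0, har⟩ := ENNReal.lt_iff_exists_nnreal_btwn.mp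
      (lt_min hpr.r_pos (by norm_num : (0:ENNReal) < 1))
    exact ⟨a, by exact_mod_cast ha0, har⟩
  have hr0le1 : (r0 : ℝ) ≤ 1 := by
    have h1 : (r0 : ENNReal) < 1 := (lt_min_iff.mp hr0r).2
    exact_mod_cast h1.le
  have hr0rad : (r0 : ENNReal) < p.radius := ((lt_min_iff.mp hr0r).1).trans_le hpr.r_le
  obtain ⟨C, hC0, hC⟩ := p.norm_mul_pow_le_of_lt_radius hr0rad
  set c : ℕ → ℂ := fun n => match n with
    | 0 => 0
    | (m+1) => p.coeff m / (m+1) with hc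
  set q : FormalMultilinearSeries ℂ ℂ ℂ := ofScalars ℂ c with hqdef
  have hqnorm : ∀ n, ‖q n‖ = ‖c n‖ := fun n => ofScalars_norm ℂ c n
  have hqrad : (r0 : ENNReal) ≤ q.radius := by
    apply q.le_radius_of_bound C
    intro n
    match n with
    | 0 => simp only [hqnorm]; simp [hc]; positivity
    | (m+1) =>
      have h1 : ‖c (m+1)‖ ≤ ‖p.coeff m‖ := by
        simp only [hc, norm_div]
        apply div_le_of_le_mul₀ (by positivity) (norm_nonneg _)
        have : (1:ℝ) ≤ ‖((m:ℂ)+1)‖ := by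
          rw [show ((m:ℂ)+1) = ((m+1 : ℕ):ℂ) by push_cast; ring]
          rw [Complex.norm_natCast]
          exact_mod_cast Nat.one_le_iff_ne_zero.mpr (Nat.succ_ne_zero m)
        nlinarith [norm_nonneg (p.coeff m)]
      calc ‖q (m+1)‖ * (r0:ℝ) ^ (m+1) ≤ ‖p.coeff m‖ * ((r0:ℝ)^m * (r0:ℝ)) := by
            rw [hqnorm, pow_succ]; exact mul_le_mul h1 le_rfl (by positivity) (norm_nonneg _)
        _ ≤ ‖p m‖ * (r0:ℝ)^m := by
            rw [p.norm_apply_eq_norm_coef]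
            have : (r0:ℝ)^m * (r0:ℝ) ≤ (r0:ℝ)^m * 1 := by
              exact mul_le_mul_of_nonneg_left hr0le1 (by positivity)
            nlinarith [norm_nonneg (p.coeff m), pow_nonneg (r0.coe_nonneg) m]
        _ ≤ C := hC m
  have hqradpos : 0 < q.radius := lt_of_lt_of_le (by exact_mod_cast hr00) hqrad
  set G : ℂ → ℂ := q.sum with hGdef
  have hq : HasFPowerSeriesOnBall G q 0 q.radius := q.hasFPowerSeriesOnBall hqradpos
  have hGan : AnalyticAt ℂ G 0 := hq.analyticAt
  have hG0 : G 0 = 0 := by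
    have := (hq.coeff_zero (fun _ => 1)).symm
    rw [this, hqdef, ofScalars_apply_eq]
    simp [hc]
  -- key derivative identity on the ball of radius r0
  have key : ∀ y : ℂ, ‖y‖ < (r0:ℝ) → y * deriv G y = y * g y := by
    intro y hy
    have hyq : y ∈ EMetric.ball (0:ℂ) r0 := by
      exact EMetric.mem_ball.mpr (by rw [edist_zero_right, enorm_eq_nnnorm]; exact_mod_cast hy)
    have h1 : HasSum (fun n => q.derivSeries n (fun _ => y)) (fderiv ℂ G (0 + y)) :=
      hq.fderiv.hasSum (EMetric.ball_subset_ball hqrad hyq)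
    have h2 : HasSum (fun n => (q.derivSeries n (fun _ => y)) y) ((fderiv ℂ G (0+y)) y) :=
      h1.mapL (ContinuousLinearMap.apply ℂ ℂ y)
    have h3 : (fderiv ℂ G (0+y)) y = y * deriv G y := by
      have h := (fderiv ℂ G (0+y)).map_smul y (1:ℂ)
      simp only [smul_eq_mul, mul_one] at h
      rw [h, ← fderiv_apply_one_eq_deriv, zero_add]
    have hterm : ∀ n : ℕ, (q.derivSeries n (fun _ => y)) y = y * (y ^ n • p.coeff n) := by
      intro n
      rw [q.derivSeries_apply_diag n y, hqdef, ofScalars_apply_eq]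
      have hne : ((n:ℂ)+1) ≠ 0 := Nat.cast_add_one_ne_zero n
      simp only [hc, smul_eq_mul, nsmul_eq_mul]
      push_cast
      field_simp
      ring
    rw [h3] at h2
    simp only [hterm] at h2
    have hyr : y ∈ EMetric.ball (0:ℂ) r := by
      refine EMetric.ball_subset_ball (le_of_lt (lt_min_iff.mp hr0r).1) ?_
      rw [EMetric.mem_ball, edist_zero_right, enorm_eq_nnnorm]; exact_mod_cast hy
    have h5 : HasSum (fun n => y * (y ^ n • p.coeff n)) (y * g y) := by
      have := (hpr.hasSum hyr).mul_left y
      simpa [p.apply_eq_pow_smul_coeff] using this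
    exact h2.unique h5
  have hderiv0 : deriv G 0 = g 0 := by
    have h1 : deriv G 0 = q 1 (fun _ => 1) := hq.hasFPowerSeriesAt.deriv
    have h2 : p.coeff 0 = g 0 := by simpa using hpr.coeff_zero (fun _ => 1)
    rw [h1, hqdef, ofScalars_apply_eq]
    simp [hc, h2]
  have hdeq : ∀ᶠ z in 𝓝 (0:ℂ), deriv G z = g z := by
    filter_upwards [Metric.ball_mem_nhds (0:ℂ) (by exact_mod_cast hr00 : (0:ℝ) < (r0:ℝ))] with z hz
    rcases eq_or_ne z 0 with rfl | hz0
    · exact hderiv0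
    · have := key z (by simpa [Metric.mem_ball, dist_eq_norm] using hz)
      exact mul_left_cancel₀ hz0 this
  refine ⟨G, hGan, hG0, ?_⟩
  filter_upwards [hGan.eventually_analyticAt, hdeq] with z hz hz2
  simpa [hz2] using hz.differentiableAt.hasDerivAt

/-- Normal form for a Fuchsian singularity of an affine structure on a curve with
normalized affine angle `θ = 0`: the singular affine structure encoded by the ODE
`z f'' = (-1 + z A(z)) f'` has developing map `z ↦ log z` in a suitable coordinate `w`. -/
theorem fuchsian_affine_normal_form_log
    (A : ℂ → ℂ) (hA : AnalyticAt ℂ A 0) :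
    ∃ r > (0 : ℝ), ∃ w : ℂ → ℂ,
      DifferentiableOn ℂ w (Metric.ball (0 : ℂ) r) ∧ w 0 = 0 ∧ deriv w 0 ≠ 0 ∧
      ∀ z ∈ Metric.ball (0 : ℂ) r, z ≠ 0 → w z ∈ Complex.slitPlane →
        z * deriv (deriv fun ζ => Complex.log (w ζ)) z
          = (-1 + z * A z) * deriv (fun ζ => Complex.log (w ζ)) z := by
  obtain ⟨B, hBan, hB0, hBd⟩ := exists_primitive_of_analyticAt hA
  set u : ℂ → ℂ := fun z => Complex.exp (B z) - 1 with hu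
  have hu0 : u 0 = 0 := by simp [hu, hB0]
  have huan : AnalyticAt ℂ u 0 := hBan.cexp.sub analyticAt_const
  set k : ℂ → ℂ := dslope u 0 with hkdef
  have hkan : AnalyticAt ℂ k 0 := by
    obtain ⟨p, hp⟩ := huan
    exact ⟨p.fslope, hp.has_fpower_series_dslope_fslope⟩
  have hkeq : ∀ z : ℂ, z ≠ 0 → 1 + z * k z = Complex.exp (B z) := by
    intro z hz
    rw [hkdef, dslope_of_ne u hz, slope_def_field]
    field_simp [hu0]
    simp [hu]
    rw [hB0, Complex.exp_zero]; ring
  obtain ⟨h, hhan, hh0, hhd⟩ := exists_primitive_of_analyticAt hkan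
  obtain ⟨r, hrpos, hr⟩ := Metric.eventually_nhds_iff_ball.mp (hBd.and hhd)
  set w : ℂ → ℂ := fun z => z * Complex.exp (h z) with hw
  have hwd : ∀ z ∈ Metric.ball (0:ℂ) r, HasDerivAt w (Complex.exp (h z) * (1 + z * k z)) z := by
    intro z hz
    have := (hasDerivAt_id z).mul ((hr z hz).2.cexp)
    exact this.congr_deriv (by simp only [_root_.id]; ring)
  refine ⟨r, hrpos, w, ?_, by simp [hw], ?_, ?_⟩
  · exact fun z hz => ((hwd z hz).differentiableAt).differentiableWithinAt
  · have h0 : deriv w 0 = Complex.exp (h 0) * (1 + 0 * k 0) :=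
      (hwd 0 (Metric.mem_ball_self hrpos)).deriv
    rw [h0]
    simp [Complex.exp_ne_zero]
  · intro z hz hz0 hzslit
    -- eventually facts near z
    have hballz : ∀ᶠ ζ in 𝓝 z, ζ ∈ Metric.ball (0:ℂ) r :=
      Metric.isOpen_ball.eventually_mem hz
    have hnez : ∀ᶠ ζ in 𝓝 z, ζ ≠ (0:ℂ) :=
      eventually_ne_nhds hz0
    have hslitz : ∀ᶠ ζ in 𝓝 z, w ζ ∈ Complex.slitPlane :=
      ((hwd z hz).differentiableAt.continuousAt).eventually_mem
        (Complex.isOpen_slitPlane.mem_nhds hzslit)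
    have hf' : ∀ᶠ ζ in 𝓝 z, deriv (fun t => Complex.log (w t)) ζ = Complex.exp (B ζ) / ζ := by
      filter_upwards [hballz, hnez, hslitz] with ζ hb hn hs
      have hd := ((hwd ζ hb).clog hs).deriv
      rw [hd, hkeq ζ hn, hw]
      field_simp [Complex.exp_ne_zero]
    have h2 : deriv (deriv fun ζ => Complex.log (w ζ)) z
        = deriv (fun ζ => Complex.exp (B ζ) / ζ) z := by
      exact Filter.EventuallyEq.deriv_eq hf'
    have h3 : HasDerivAt (fun ζ => Complex.exp (B ζ) / ζ)
        ((Complex.exp (B z) * A z * z - Complex.exp (B z) * 1) / z ^ 2) z :=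
      ((hr z hz).1.cexp).div (hasDerivAt_id z) hz0
    rw [h2, h3.deriv, hf'.self_of_nhds]
    field_simp
    ring
end

section
/- Let θ ∈ ℂ be a complex number that is not a strictly positive integer, and let T be a function holomorphic on a neighborhood of 0 in ℂ with T(0) = (1 − θ²)/2. Then there exists a function u holomorphic on a neighborhood of 0 in ℂ with u(0) = θ − 1 such that z·u'(z) = T(z) + u(z) + (1/2)·u(z)² for all z in that neighborhood. -/
open Filter Topology

open Finset

noncomputable def riccatiCoef (θ : ℂ) (t : ℕ → ℂ) : ℕ → ℂ
  | 0 => θ - 1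
  | (n+1) => (t (n+1) + (1/2) * ∑ i ∈ (range n).attach,
      riccatiCoef θ t (i.1+1) * riccatiCoef θ t (n-i.1)) / ((n+1 : ℂ) - θ)
  termination_by n => n
  decreasing_by
  · exact Nat.succ_lt_succ (Finset.mem_range.mp i.2)
  · exact Nat.lt_succ_of_le (Nat.sub_le _ _)

lemma riccatiCoef_zero (θ : ℂ) (t : ℕ → ℂ) : riccatiCoef θ t 0 = θ - 1 := by
  rw [riccatiCoef]

open Finset in
lemma riccatiCoef_succ (θ : ℂ) (t : ℕ → ℂ) (n : ℕ) :
    riccatiCoef θ t (n+1) = (t (n+1) + (1/2) * ∑ i ∈ range n,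
      riccatiCoef θ t (i+1) * riccatiCoef θ t (n-i)) / ((n+1 : ℂ) - θ) := by
  rw [riccatiCoef]
  congr 3
  exact Finset.sum_attach _ (fun i => riccatiCoef θ t (i+1) * riccatiCoef θ t (n-i))

open Finset in
lemma riccatiCoef_key (θ : ℂ) (t : ℕ → ℂ) (hθ : ∀ k : ℕ, 1 ≤ k → θ ≠ (k : ℂ))
    (ht0 : t 0 = (1 - θ^2)/2) (n : ℕ) :
    (n : ℂ) * riccatiCoef θ t n = t n + riccatiCoef θ t n
      + (1/2) * ∑ k ∈ range (n+1), riccatiCoef θ t k * riccatiCoef θ t (n-k) := by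
  set a := riccatiCoef θ t with ha
  cases n with
  | zero =>
      have h0 : a 0 = θ - 1 := riccatiCoef_zero θ t
      simp only [Nat.cast_zero, zero_mul, zero_add, range_one, sum_singleton, Nat.sub_zero, h0,
        ht0]
      ring
  | succ m =>
      have h1 : θ ≠ ((m+1 : ℕ) : ℂ) := hθ (m+1) (Nat.succ_le_succ (Nat.zero_le m))
      have hne : ((m : ℂ) + 1) - θ ≠ 0 := by
        rw [sub_ne_zero]
        push_cast at h1
        exact fun h => h1 h.symm
      have e1 : ((m : ℂ) + 1 - θ) * a (m+1)
          = t (m+1) + (1/2) * ∑ i ∈ range m, a (i+1) * a (m-i) := by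
        rw [ha, riccatiCoef_succ θ t m]
        field_simp
      have e2 : ∑ k ∈ range (m+2), a k * a (m+1-k)
          = a 0 * a (m+1) + ((∑ i ∈ range m, a (i+1) * a (m-i)) + a (m+1) * a 0) := by
        rw [Finset.sum_range_succ' (fun k => a k * a (m+1-k)) (m+1), Finset.sum_range_succ]
        simp only [Nat.succ_sub_succ, Nat.sub_self, Nat.sub_zero]
        ring
      have h0 : a 0 = θ - 1 := riccatiCoef_zero θ t
      rw [e2, h0]
      push_cast
      linear_combination e1

/-- A positive `c` with `c * n ≤ ‖n - θ‖` for all `n ≥ 1`. -/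
lemma riccati_denom_bound (θ : ℂ) (hθ : ∀ k : ℕ, 1 ≤ k → θ ≠ (k : ℂ)) :
    ∃ c : ℝ, 0 < c ∧ c ≤ 1/2 ∧ ∀ n : ℕ, 1 ≤ n → c * n ≤ ‖(n : ℂ) - θ‖ := by
  set N : ℕ := ⌈2 * ‖θ‖⌉₊ + 1 with hN
  have hNne : (Finset.Icc 1 N).Nonempty := ⟨1, by simp [hN]⟩
  set c : ℝ := min (1/2) ((Finset.Icc 1 N).inf' hNne fun n => ‖(n : ℂ) - θ‖ / n) with hc
  have hcpos : 0 < c := by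
    refine lt_min (by norm_num) ?_
    rw [Finset.lt_inf'_iff]
    intro n hn
    rw [Finset.mem_Icc] at hn
    have hn1 : 1 ≤ n := hn.1
    have hne : ((n : ℂ) - θ) ≠ 0 := sub_ne_zero.mpr (fun h => hθ n hn1 h.symm)
    have : (0:ℝ) < n := by exact_mod_cast hn1
    exact div_pos (norm_pos_iff.mpr hne) this
  refine ⟨c, hcpos, min_le_left _ _, fun n hn => ?_⟩
  by_cases hn2 : n ≤ N
  · have h1 : c ≤ ‖(n : ℂ) - θ‖ / n :=
      le_trans (min_le_right _ _) (Finset.inf'_le _ (Finset.mem_Icc.mpr ⟨hn, hn2⟩))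
    have hnp : (0:ℝ) < n := by exact_mod_cast hn
    calc c * n ≤ (‖(n : ℂ) - θ‖ / n) * n := by gcongr
      _ = ‖(n : ℂ) - θ‖ := by field_simp
  · have hNn : (N : ℝ) < n := by exact_mod_cast Nat.lt_of_not_le hn2
    have h2 : 2 * ‖θ‖ < (n : ℝ) := by
      have := Nat.le_ceil (2 * ‖θ‖)
      have : (2 * ‖θ‖ : ℝ) ≤ N := by
        rw [hN]; push_cast; linarith [Nat.le_ceil (2 * ‖θ‖)]
      linarith
    have h3 : ‖(n : ℂ)‖ - ‖θ‖ ≤ ‖(n : ℂ) - θ‖ := norm_sub_norm_le _ _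
    rw [Complex.norm_natCast] at h3
    have hc2 : c ≤ 1/2 := min_le_left _ _
    have hnn : (0:ℝ) ≤ n := Nat.cast_nonneg n
    nlinarith

lemma riccatiCoef_growth (θ : ℂ) (t : ℕ → ℂ) (hθ : ∀ k : ℕ, 1 ≤ k → θ ≠ (k : ℂ))
    (C σ : ℝ) (hC : 0 < C) (hσ : 0 < σ) (ht : ∀ n, ‖t n‖ ≤ C * σ ^ n) :
    ∃ K ρ : ℝ, 0 < K ∧ 0 < ρ ∧ σ ≤ ρ ∧ ∀ n, ‖riccatiCoef θ t n‖ ≤ K * ρ ^ n := by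
  obtain ⟨c, hcpos, hc12, hc⟩ := riccati_denom_bound θ hθ
  set a := riccatiCoef θ t with ha
  set ρ : ℝ := max σ (C * σ / c ^ 2) with hρ
  have hρpos : 0 < ρ := lt_max_of_lt_left hσ
  have hσρ : σ ≤ ρ := le_max_left _ _
  have hCσ : C * σ ≤ c ^ 2 * ρ := by
    have h1 : C * σ / c ^ 2 ≤ ρ := le_max_right _ _
    calc C * σ = c ^ 2 * (C * σ / c ^ 2) := by field_simp
      _ ≤ c ^ 2 * ρ := by gcongr
  have key : ∀ n, 1 ≤ n → ‖a n‖ ≤ c * ρ ^ n := by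
    intro n
    induction n using Nat.strong_induction_on with
    | _ n IH =>
      match n with
      | 0 => intro h; omega
      | (m+1) =>
        intro _
        have hS : ‖∑ i ∈ range m, a (i+1) * a (m-i)‖ ≤ m * (c^2 * ρ^(m+1)) := by
          calc ‖∑ i ∈ range m, a (i+1) * a (m-i)‖
              ≤ ∑ i ∈ range m, ‖a (i+1) * a (m-i)‖ := norm_sum_le _ _
            _ ≤ ∑ i ∈ range m, c^2 * ρ^(m+1) := by
                apply Finset.sum_le_sum
                intro i hi
                rw [Finset.mem_range] at hi
                have h1 := IH (i+1) (by omega) (by omega)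
                have h2 := IH (m-i) (by omega) (by omega)
                rw [norm_mul]
                calc ‖a (i+1)‖ * ‖a (m-i)‖ ≤ (c * ρ^(i+1)) * (c * ρ^(m-i)) := by
                      gcongr
                  _ = c^2 * ρ^((i+1)+(m-i)) := by rw [pow_add]; ring
                  _ = c^2 * ρ^(m+1) := by congr 2; omega
            _ = m * (c^2 * ρ^(m+1)) := by rw [Finset.sum_const, Finset.card_range]; simp
        have ht' : ‖t (m+1)‖ ≤ c^2 * ρ^(m+1) := by
          calc ‖t (m+1)‖ ≤ C * σ^(m+1) := ht (m+1)
            _ = (C * σ) * σ^m := by ring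
            _ ≤ (c^2 * ρ) * ρ^m := by gcongr
            _ = c^2 * ρ^(m+1) := by ring
        have hden : c * (m+1) ≤ ‖((m : ℂ) + 1) - θ‖ := by
          have := hc (m+1) (by omega)
          push_cast at this
          exact this
        have hdenpos : (0:ℝ) < c * (m+1) := by positivity
        have heq : a (m+1) = (t (m+1) + (1/2) * ∑ i ∈ range m, a (i+1) * a (m-i))
            / ((m : ℂ) + 1 - θ) := by
          rw [ha, riccatiCoef_succ θ t m]
        rw [heq, norm_div]
        have hnum : ‖t (m+1) + (1/2) * ∑ i ∈ range m, a (i+1) * a (m-i)‖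
            ≤ c^2 * ρ^(m+1) + (1/2) * (m * (c^2 * ρ^(m+1))) := by
          calc _ ≤ ‖t (m+1)‖ + ‖(1/2 : ℂ) * ∑ i ∈ range m, a (i+1) * a (m-i)‖ :=
                norm_add_le _ _
            _ = ‖t (m+1)‖ + ‖(1/2 : ℂ)‖ * ‖∑ i ∈ range m, a (i+1) * a (m-i)‖ := by
                rw [norm_mul]
            _ ≤ c^2 * ρ^(m+1) + (1/2) * (m * (c^2 * ρ^(m+1))) := by
                have : ‖(1/2 : ℂ)‖ = 1/2 := by norm_num
                rw [this]; gcongr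
        have hP : (0:ℝ) < ρ^(m+1) := by positivity
        calc ‖t (m+1) + (1/2) * ∑ i ∈ range m, a (i+1) * a (m-i)‖ / ‖(m : ℂ) + 1 - θ‖
            ≤ (c^2 * ρ^(m+1) + (1/2) * (m * (c^2 * ρ^(m+1)))) / (c * (m+1)) := by
              exact div_le_div₀ (by positivity) hnum hdenpos hden
          _ ≤ c * ρ^(m+1) := by
              rw [div_le_iff₀ hdenpos]
              nlinarith [mul_nonneg (mul_nonneg (mul_nonneg hcpos.le hcpos.le) hP.le)
                (Nat.cast_nonneg (α := ℝ) m)]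
  refine ⟨‖θ - 1‖ + c, ρ, by positivity, hρpos, hσρ, fun n => ?_⟩
  cases n with
  | zero => simp [ha, riccatiCoef_zero]; positivity
  | succ m =>
    calc ‖a (m+1)‖ ≤ c * ρ^(m+1) := key (m+1) (by omega)
      _ ≤ (‖θ - 1‖ + c) * ρ^(m+1) := by gcongr; linarith [norm_nonneg (θ-1)]

lemma summable_norm_coeff_mul_pow {b : ℕ → ℂ} {K ρ : ℝ} (hρ : 0 ≤ ρ)
    (hb : ∀ n, ‖b n‖ ≤ K * ρ ^ n) {z : ℂ} (hz : ρ * ‖z‖ < 1) :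
    Summable fun n => ‖b n * z ^ n‖ := by
  have hK : 0 ≤ K := le_trans (norm_nonneg (b 0)) (by simpa using hb 0)
  refine Summable.of_nonneg_of_le (fun n => norm_nonneg _) (fun n => ?_)
    ((summable_geometric_of_lt_one (by positivity) hz).mul_left K)
  rw [norm_mul, norm_pow]
  calc ‖b n‖ * ‖z‖^n ≤ (K * ρ^n) * ‖z‖^n := by gcongr; exact hb n
    _ = K * (ρ*‖z‖)^n := by rw [mul_pow]; ring

lemma hasDerivAt_tsum_pow {b : ℕ → ℂ} {K ρ : ℝ} (hρ : 0 < ρ)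
    (hb : ∀ n, ‖b n‖ ≤ K * ρ ^ n) {z : ℂ} (hz : ‖z‖ < 1/(2*ρ)) :
    HasDerivAt (fun w => ∑' n, b n * w ^ n) (∑' n, b n * ((n:ℂ) * z ^ (n-1))) z := by
  have hK : 0 ≤ K := le_trans (norm_nonneg (b 0)) (by simpa using hb 0)
  set s : ℝ := (‖z‖ + 1/(2*ρ))/2 with hs
  have hspos : 0 < s := by positivity
  have hzs : ‖z‖ < s := by rw [hs]; linarith
  have hsr : s < 1/(2*ρ) := by rw [hs]; linarith
  clear_value s
  have hρs : ρ * s < 1 := by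
    have h1 : ρ * s < ρ * (1/(2*ρ)) := by gcongr
    have h2 : ρ * (1/(2*ρ)) = 1/2 := by field_simp
    linarith
  have hzmem : z ∈ Metric.ball (0:ℂ) s := by rwa [Metric.mem_ball, dist_zero_right]
  have hsum : Summable fun n : ℕ => (K/s) * ((n:ℝ) * (ρ*s)^n) := by
    have : Summable fun n : ℕ => (n:ℝ)^1 * (ρ*s)^n :=
      summable_pow_mul_geometric_of_norm_lt_one 1
        (by rw [Real.norm_of_nonneg (by positivity)]; exact hρs)
    simpa [pow_one] using this.mul_left (K/s)
  refine hasDerivAt_tsum_of_isPreconnected hsum Metric.isOpen_ball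
    (convex_ball (0:ℂ) s).isPreconnected
    (fun n y _ => (hasDerivAt_pow n y).const_mul (b n)) (fun n y hy => ?_) hzmem
    ((summable_norm_coeff_mul_pow hρ.le hb (by nlinarith)).of_norm) hzmem
  rw [Metric.mem_ball, dist_zero_right] at hy
  match n with
  | 0 => simp [hK, hspos.le]
  | (m+1) =>
    have : ‖b (m+1) * (((m+1 : ℕ):ℂ) * y^m)‖ = ‖b (m+1)‖ * ((m+1 : ℝ) * ‖y‖^m) := by
      rw [norm_mul, norm_mul, norm_pow, Complex.norm_natCast]; push_cast; ring
    rw [Nat.add_sub_cancel, this]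
    calc ‖b (m+1)‖ * ((m+1 : ℝ) * ‖y‖^m) ≤ (K * ρ^(m+1)) * ((m+1 : ℝ) * s^m) := by
          gcongr
          exact hb (m+1)
      _ = (K/s) * (((m+1:ℕ) : ℝ) * (ρ*s)^(m+1)) := by
          field_simp
          push_cast
          ring

/-- Every projective structure with a Fuchsian singularity of normalized projective angle
`θ` contains a Fuchsian singular affine structure in its class (Briot–Bouquet): if `θ` is
not a strictly positive integer and `T` is holomorphic near `0` with `T 0 = (1 - θ²)/2`,
the Riccati equation `z u' = T + u + (1/2)u²` has a holomorphic solution with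
`u 0 = θ - 1`. -/
theorem fuchsian_projective_to_affine
    (θ : ℂ) (hθ : ∀ k : ℕ, 1 ≤ k → θ ≠ (k : ℂ))
    (T : ℂ → ℂ) (hT : AnalyticAt ℂ T 0) (hT0 : T 0 = (1 - θ ^ 2) / 2) :
    ∃ u : ℂ → ℂ, AnalyticAt ℂ u 0 ∧ u 0 = θ - 1 ∧
      ∀ᶠ z in 𝓝 (0 : ℂ), z * deriv u z = T z + u z + (1 / 2) * u z ^ 2 := by
  obtain ⟨p, hp⟩ := hT
  obtain ⟨C, σ, hC, hσ, hpb⟩ := p.le_mul_pow_of_radius_pos hp.radius_pos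
  set t : ℕ → ℂ := fun n => p.coeff n with htdef
  have htb : ∀ n, ‖t n‖ ≤ C * σ ^ n := by
    intro n
    calc ‖t n‖ ≤ ‖p n‖ := by
          have h := (p n).le_opNorm (fun _ => (1:ℂ))
          exact (p.norm_apply_eq_norm_coef (n := n)).ge
      _ ≤ C * σ^n := hpb n
  have ht0 : t 0 = (1 - θ^2)/2 := by
    have h := hp.coeff_zero 1
    rw [htdef]
    simp only [FormalMultilinearSeries.coeff]
    rw [h, hT0]
  have hsumT := hasFPowerSeriesAt_iff.mp hp
  rw [Metric.eventually_nhds_iff] at hsumT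
  obtain ⟨r₁, hr₁, hTs⟩ := hsumT
  obtain ⟨K, ρ, hK, hρ, hσρ, hab⟩ := riccatiCoef_growth θ t hθ C σ hC hσ htb
  set a := riccatiCoef θ t with hadef
  set r₀ : ℝ := min r₁ (1/(2*ρ)) with hr₀def
  have hr₀ : 0 < r₀ := lt_min hr₁ (by positivity)
  set u : ℂ → ℂ := fun z => ∑' n, a n * z^n with hu
  have hzρ : ∀ z : ℂ, ‖z‖ < r₀ → ρ * ‖z‖ < 1 := by
    intro z hz
    have h1 : ‖z‖ < 1/(2*ρ) := lt_of_lt_of_le hz (min_le_right _ _)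
    have h2 : ρ * ‖z‖ < ρ * (1/(2*ρ)) := by gcongr
    have h3 : ρ * (1/(2*ρ)) = 1/2 := by field_simp
    linarith
  have hDeriv : ∀ z : ℂ, ‖z‖ < r₀ →
      HasDerivAt u (∑' n, a n * ((n:ℂ) * z ^ (n-1))) z :=
    fun z hz => hasDerivAt_tsum_pow hρ hab (lt_of_lt_of_le hz (min_le_right _ _))
  have hu0 : u 0 = θ - 1 := by
    have h : u 0 = ∑' n, a n * (0:ℂ)^n := rfl
    rw [h, tsum_eq_single 0 (fun n hn => by simp [zero_pow hn])]
    simp [hadef, riccatiCoef_zero]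
  have hana : AnalyticAt ℂ u 0 := by
    have hdiff : DifferentiableOn ℂ u (Metric.ball 0 r₀) := by
      intro z hz
      rw [Metric.mem_ball, dist_zero_right] at hz
      exact (hDeriv z hz).differentiableAt.differentiableWithinAt
    exact hdiff.analyticAt (Metric.ball_mem_nhds 0 hr₀)
  refine ⟨u, hana, hu0, ?_⟩
  filter_upwards [Metric.ball_mem_nhds (0:ℂ) hr₀] with z hz
  rw [Metric.mem_ball, dist_zero_right] at hz
  have hρz := hzρ z hz
  have hσz : σ * ‖z‖ < 1 :=
    lt_of_le_of_lt (by gcongr : σ * ‖z‖ ≤ ρ * ‖z‖) hρz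
  have hna : Summable fun n => ‖a n * z^n‖ := summable_norm_coeff_mul_pow hρ.le hab hρz
  have hsa : Summable fun n => a n * z^n := hna.of_norm
  have hnt : Summable fun n => ‖t n * z^n‖ := summable_norm_coeff_mul_pow hσ.le htb hσz
  have hst : Summable fun n => t n * z^n := hnt.of_norm
  have hTz : T z = ∑' n, t n * z^n := by
    have h := hTs (y := z) (by rw [dist_zero_right]; exact lt_of_lt_of_le hz (min_le_left _ _))
    rw [zero_add] at h
    rw [← h.tsum_eq]
    exact tsum_congr fun n => by rw [smul_eq_mul, mul_comm]
  have hterm : ∀ n, ∑ k ∈ range (n+1), (a k * z^k) * (a (n-k) * z^(n-k))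
      = (∑ k ∈ range (n+1), a k * a (n-k)) * z^n := by
    intro n
    rw [Finset.sum_mul]
    refine Finset.sum_congr rfl fun k hk => ?_
    rw [Finset.mem_range] at hk
    calc (a k * z^k) * (a (n-k) * z^(n-k)) = a k * a (n-k) * (z^k * z^(n-k)) := by ring
      _ = a k * a (n-k) * z^n := by
          rw [← pow_add, Nat.add_sub_cancel' (by omega : k ≤ n)]
  have hq : Summable fun n => (∑ k ∈ range (n+1), a k * a (n-k)) * z^n :=
    ((summable_norm_sum_mul_range_of_summable_norm hna hna).of_norm).congr hterm
  have hu2 : u z ^ 2 = ∑' n, (∑ k ∈ range (n+1), a k * a (n-k)) * z^n := by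
    have h : u z = ∑' n, a n * z^n := rfl
    rw [sq, h, tsum_mul_tsum_eq_tsum_sum_range_of_summable_norm hna hna]
    exact tsum_congr hterm
  have hlhs : z * deriv u z = ∑' (n : ℕ), (n:ℂ) * a n * z^n := by
    rw [(hDeriv z hz).deriv, ← tsum_mul_left]
    refine tsum_congr fun n => ?_
    match n with
    | 0 => simp
    | (m+1) =>
      rw [Nat.add_sub_cancel]
      push_cast
      ring
  rw [hlhs, hTz, hu2]
  have hhalf : (1/2 : ℂ) * ∑' n, (∑ k ∈ range (n+1), a k * a (n-k)) * z^n
      = ∑' n, (1/2 : ℂ) * ((∑ k ∈ range (n+1), a k * a (n-k)) * z^n) := tsum_mul_left.symm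
  rw [hhalf, ← Summable.tsum_add hst hsa, ← Summable.tsum_add (hst.add hsa) (hq.mul_left _)]
  refine tsum_congr fun n => ?_
  have hk := riccatiCoef_key θ t hθ ht0 n
  linear_combination z^n * hk
end

section
/- Let n ≥ 1, let Z : ℂⁿ → ℂⁿ and ρ : ℂⁿ → ℂ, and on E = ℂⁿ × ℂ × ℂ define the vector fields X(z,ζ,ξ) = (ζ·Z(z), ζ·ξ, (1/2)·ξ² − ρ(z)·ζ²), H(z,ζ,ξ) = (0, ζ, ξ), and Y(z,ζ,ξ) = (0, 0, 2). Let p = (z,ζ,ξ) ∈ E and assume Z and ρ are complex-differentiable at z. Then, with the Lie bracket of vector fields defined by [V,W](x) = DW(x)(V(x)) − DV(x)(W(x)), one has [Y,X](p) = 2·H(p), [H,X](p) = X(p), and [H,Y](p) = −Y(p). -/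
open Filter Topology

/-- The Lie bracket of two vector fields, `[V,W](x) = DW(x)(V(x)) - DV(x)(W(x))`. -/
noncomputable def lieBracket {E : Type*} [NormedAddCommGroup E] [NormedSpace ℂ E]
    (V W : E → E) (x : E) : E :=
  fderiv ℂ W x (V x) - fderiv ℂ V x (W x)

/-- The `sl(2,ℂ)` relations for the geodesic vector field of a foliated projective
structure on the bundle of 1-jets: with `X = ζZ ⊕ ζξ ∂/∂ζ ⊕ ((1/2)ξ² - ρζ²) ∂/∂ξ`,
`H = ζ ∂/∂ζ ⊕ ξ ∂/∂ξ` and `Y = 2 ∂/∂ξ`, one has `[Y,X] = 2H`, `[H,X] = X`,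
`[H,Y] = -Y`. -/
theorem geodesic_field_sl2_relations
    (n : ℕ) (hn : 1 ≤ n)
    (Z : (Fin n → ℂ) → (Fin n → ℂ)) (ρ : (Fin n → ℂ) → ℂ)
    (X H Y : ((Fin n → ℂ) × ℂ × ℂ) → ((Fin n → ℂ) × ℂ × ℂ))
    (hX : X = fun p => (p.2.1 • Z p.1, p.2.1 * p.2.2, (1 / 2) * p.2.2 ^ 2 - ρ p.1 * p.2.1 ^ 2))
    (hH : H = fun p => (0, p.2.1, p.2.2))
    (hY : Y = fun _ => (0, 0, 2))
    (p : (Fin n → ℂ) × ℂ × ℂ)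
    (hZ : DifferentiableAt ℂ Z p.1) (hρ : DifferentiableAt ℂ ρ p.1) :
    lieBracket Y X p = (2 : ℂ) • H p ∧
    lieBracket H X p = X p ∧
    lieBracket H Y p = -Y p := by
  subst hX; subst hH; subst hY
  -- basic derivatives
  have hfst : HasFDerivAt (fun q : ((Fin n → ℂ) × ℂ × ℂ) => q.1) (ContinuousLinearMap.fst ℂ (Fin n → ℂ) (ℂ × ℂ)) p :=
    hasFDerivAt_fst
  have hζ : HasFDerivAt (fun q : ((Fin n → ℂ) × ℂ × ℂ) => q.2.1)
      ((ContinuousLinearMap.fst ℂ ℂ ℂ).comp (ContinuousLinearMap.snd ℂ (Fin n → ℂ) (ℂ × ℂ))) p :=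
    hasFDerivAt_fst.comp p hasFDerivAt_snd
  have hξ : HasFDerivAt (fun q : ((Fin n → ℂ) × ℂ × ℂ) => q.2.2)
      ((ContinuousLinearMap.snd ℂ ℂ ℂ).comp (ContinuousLinearMap.snd ℂ (Fin n → ℂ) (ℂ × ℂ))) p :=
    hasFDerivAt_snd.comp p hasFDerivAt_snd
  have hZ' : HasFDerivAt (fun q : ((Fin n → ℂ) × ℂ × ℂ) => Z q.1)
      ((fderiv ℂ Z p.1).comp (ContinuousLinearMap.fst ℂ (Fin n → ℂ) (ℂ × ℂ))) p :=
    hZ.hasFDerivAt.comp p hfst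
  have hρ' : HasFDerivAt (fun q : ((Fin n → ℂ) × ℂ × ℂ) => ρ q.1)
      ((fderiv ℂ ρ p.1).comp (ContinuousLinearMap.fst ℂ (Fin n → ℂ) (ℂ × ℂ))) p :=
    hρ.hasFDerivAt.comp p hfst
  have h1 := hζ.smul hZ'
  have h2 := hζ.mul hξ
  have hξsq : HasFDerivAt (fun q : ((Fin n → ℂ) × ℂ × ℂ) => q.2.2 ^ 2)
      (p.2.2 • ((ContinuousLinearMap.snd ℂ ℂ ℂ).comp (ContinuousLinearMap.snd ℂ (Fin n → ℂ) (ℂ × ℂ)))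
        + p.2.2 • ((ContinuousLinearMap.snd ℂ ℂ ℂ).comp (ContinuousLinearMap.snd ℂ (Fin n → ℂ) (ℂ × ℂ)))) p := by
    have := hξ.mul hξ
    simpa [sq, Pi.mul_def] using this
  have hζsq : HasFDerivAt (fun q : ((Fin n → ℂ) × ℂ × ℂ) => q.2.1 ^ 2)
      (p.2.1 • ((ContinuousLinearMap.fst ℂ ℂ ℂ).comp (ContinuousLinearMap.snd ℂ (Fin n → ℂ) (ℂ × ℂ)))
        + p.2.1 • ((ContinuousLinearMap.fst ℂ ℂ ℂ).comp (ContinuousLinearMap.snd ℂ (Fin n → ℂ) (ℂ × ℂ)))) p := by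
    have := hζ.mul hζ
    simpa [sq, Pi.mul_def] using this
  have h3a := hξsq.const_mul ((1:ℂ)/2)
  have h3b := hρ'.mul hζsq
  have h3 := h3a.sub h3b
  have hXd : HasFDerivAt (fun p : ((Fin n → ℂ) × ℂ × ℂ) =>
      (p.2.1 • Z p.1, p.2.1 * p.2.2, (1 / 2) * p.2.2 ^ 2 - ρ p.1 * p.2.1 ^ 2)) _ p :=
    h1.prodMk (h2.prodMk h3)
  have hHd : HasFDerivAt (fun p : ((Fin n → ℂ) × ℂ × ℂ) => ((0 : Fin n → ℂ), p.2.1, p.2.2))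
      ((0 : ((Fin n → ℂ) × ℂ × ℂ) →L[ℂ] (Fin n → ℂ)).prod (ContinuousLinearMap.snd ℂ (Fin n → ℂ) (ℂ × ℂ))) p :=
    (hasFDerivAt_const (0 : (Fin n → ℂ)) p).prodMk hasFDerivAt_snd
  have hYd : HasFDerivAt (fun _ : ((Fin n → ℂ) × ℂ × ℂ) => ((0 : Fin n → ℂ), (0:ℂ), (2:ℂ)))
      (0 : ((Fin n → ℂ) × ℂ × ℂ) →L[ℂ] ((Fin n → ℂ) × ℂ × ℂ)) p :=
    hasFDerivAt_const _ p
  have eX := hXd.fderiv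
  have eH := hHd.fderiv
  have eY := hYd.fderiv
  unfold lieBracket
  rw [eX, eH, eY]
  simp only [ContinuousLinearMap.prod_apply, ContinuousLinearMap.add_apply,
      ContinuousLinearMap.sub_apply, ContinuousLinearMap.smul_apply,
      ContinuousLinearMap.comp_apply, ContinuousLinearMap.smulRight_apply,
      ContinuousLinearMap.coe_fst', ContinuousLinearMap.coe_snd',
      ContinuousLinearMap.zero_apply, map_zero, smul_zero, zero_smul,
      add_zero, zero_add, sub_zero, zero_sub, Prod.mk.injEq, smul_eq_mul,
      Prod.smul_mk, Prod.neg_mk, neg_zero, mul_zero]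
  refine ⟨⟨trivial, by ring, by ring⟩, ?_, trivial⟩
  simp only [Prod.mk_sub_mk, sub_zero, Prod.mk.injEq]
  exact ⟨trivial, by ring, by ring⟩
end

section
/- Let n ≥ 1, let Z : ℂⁿ → ℂⁿ and ρ : ℂⁿ → ℂ, let U ⊆ ℂ be open, and let z : U → ℂⁿ and ζ, ξ : U → ℂ be complex-differentiable functions satisfying, for all t ∈ U: z'(t) = ζ(t)·Z(z(t)), ζ'(t) = ζ(t)·ξ(t), and ξ'(t) = (1/2)·ξ(t)² − ρ(z(t))·ζ(t)². Let a, b, c, d ∈ ℂ with ad − bc = 1, set φ(t) = (at+b)/(ct+d), and let V = {t ∈ ℂ : ct + d ≠ 0 and φ(t) ∈ U}. Then the functions z̃(t) = z(φ(t)), ζ̃(t) = (ct+d)⁻²·ζ(φ(t)), and ξ̃(t) = (ct+d)⁻²·ξ(φ(t)) − 2c/(ct+d) satisfy the same system on V: z̃'(t) = ζ̃(t)·Z(z̃(t)), ζ̃'(t) = ζ̃(t)·ξ̃(t), and ξ̃'(t) = (1/2)·ξ̃(t)² − ρ(z̃(t))·ζ̃(t)². -/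
open Filter Topology

/-- Reparametrization invariance of the geodesic flow of a foliated projective structure
(integral form of the `sl(2,ℂ)` relations): precomposing a solution of the geodesic system
with a fractional linear transformation in `SL(2,ℂ)` and transforming the jet coordinates
accordingly yields again a solution. -/
theorem geodesic_flow_mobius_invariance
    (n : ℕ) (hn : 1 ≤ n)
    (Z : (Fin n → ℂ) → (Fin n → ℂ)) (ρ : (Fin n → ℂ) → ℂ)
    (U : Set ℂ) (hU : IsOpen U)
    (z : ℂ → (Fin n → ℂ)) (ζ ξ : ℂ → ℂ)
    (hz : ∀ t ∈ U, HasDerivAt z (ζ t • Z (z t)) t)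
    (hζ : ∀ t ∈ U, HasDerivAt ζ (ζ t * ξ t) t)
    (hξ : ∀ t ∈ U, HasDerivAt ξ ((1 / 2) * ξ t ^ 2 - ρ (z t) * ζ t ^ 2) t)
    (a b c d : ℂ) (had : a * d - b * c = 1)
    (φ : ℂ → ℂ) (hφ : φ = fun t => (a * t + b) / (c * t + d))
    (V : Set ℂ) (hV : V = {t : ℂ | c * t + d ≠ 0 ∧ φ t ∈ U})
    (zt : ℂ → (Fin n → ℂ)) (ζt ξt : ℂ → ℂ)
    (hzt : zt = fun t => z (φ t))
    (hζt : ζt = fun t => ((c * t + d) ^ 2)⁻¹ * ζ (φ t))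
    (hξt : ξt = fun t => ((c * t + d) ^ 2)⁻¹ * ξ (φ t) - 2 * c / (c * t + d)) :
    ∀ t ∈ V,
      HasDerivAt zt (ζt t • Z (zt t)) t ∧
      HasDerivAt ζt (ζt t * ξt t) t ∧
      HasDerivAt ξt ((1 / 2) * ξt t ^ 2 - ρ (zt t) * ζt t ^ 2) t := by
  intro t ht
  rw [hV, Set.mem_setOf_eq] at ht
  obtain ⟨hw, hu⟩ := ht
  have hden : HasDerivAt (fun t : ℂ => c * t + d) c t := by
    simpa using ((hasDerivAt_id t).const_mul c).add_const d
  have hnum : HasDerivAt (fun t : ℂ => a * t + b) a t := by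
    simpa using ((hasDerivAt_id t).const_mul a).add_const b
  have hφd : HasDerivAt φ (((c * t + d) ^ 2)⁻¹) t := by
    rw [hφ]
    have h := hnum.div hden hw
    rw [show a * (c * t + d) - (a * t + b) * c = 1 from by linear_combination had,
      one_div] at h
    exact h
  have hsq : HasDerivAt (fun t : ℂ => ((c * t + d) ^ 2)⁻¹)
      (-(2 * c * (c * t + d)) / ((c * t + d) ^ 2) ^ 2) t := by
    have h := ((hden.pow 2).inv (pow_ne_zero 2 hw))
    convert h using 1
    · rfl
    · rfl
    · rfl
    simp only [Pi.pow_apply]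
    ring
  have hzc : HasDerivAt (fun s => z (φ s))
      (((c * t + d) ^ 2)⁻¹ • ζ (φ t) • Z (z (φ t))) t :=
    (hz (φ t) hu).scomp t hφd
  have hζc : HasDerivAt (fun s => ζ (φ s))
      ((ζ (φ t) * ξ (φ t)) * ((c * t + d) ^ 2)⁻¹) t :=
    (hζ (φ t) hu).comp t hφd
  have hξc : HasDerivAt (fun s => ξ (φ s))
      (((1 / 2) * ξ (φ t) ^ 2 - ρ (z (φ t)) * ζ (φ t) ^ 2) * ((c * t + d) ^ 2)⁻¹) t :=
    (hξ (φ t) hu).comp t hφd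
  have hfrac : HasDerivAt (fun t : ℂ => 2 * c / (c * t + d))
      (-(2 * c * c) / (c * t + d) ^ 2) t := by
    have h := (hasDerivAt_const t (2 * c)).div hden hw
    convert h using 1
    · rfl
    · rfl
    · rfl
    ring
  obtain ⟨w, hwd⟩ : ∃ w : ℂ, c * t + d = w := ⟨_, rfl⟩
  have h1 : w * w⁻¹ = 1 := mul_inv_cancel₀ (hwd ▸ hw)
  refine ⟨?_, ?_, ?_⟩
  · convert hzc using 1
    simp only [hzt, hζt, smul_smul]
  · have h := hsq.mul hζc
    convert h using 1
    · rfl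
    · rfl
    · rw [hζt]; rfl
    simp only [hζt, hξt]
    rw [hwd]
    linear_combination (2 * c * (w⁻¹) ^ 3 * ζ (φ t)) * h1
  · have h := (hsq.mul hξc).sub hfrac
    convert h using 1
    · rfl
    · rfl
    · rw [hξt]; rfl
    simp only [hζt, hξt, hzt]
    rw [hwd]
    linear_combination (2 * c * (w⁻¹) ^ 3 * ξ (φ t)) * h1
end
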